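/- Suppose f : ℝ → EReal is k-convex, r is an r-function, and max(r*(φ), f(φ)) < +∞ for some φ > 0. Then for every real a < speedp(cv(r, f*)), one has cv(r, f*)(a) = inf {λ·r(b) + (1−λ)·f*(c) : λ ∈ [0,1], b, c ∈ ℝ, λ·b + (1−λ)·c = a, λ·r(b) + (1−λ)·f*(c) < 0, and r(b) < 0}. -/

import Mathlib

open Set Filter Topology

noncomputable section

/-- `f : ℝ → EReal` is convex iff its epigraph is a convex set. -/
def EConvex (f : ℝ → EReal) : Prop :=
  Convex ℝ {p : ℝ × ℝ | f p.1 ≤ (p.2 : EReal)}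

/-- The Fenchel dual `f*(a) = sup_θ (θ·a − f(θ))`. -/
def Fd (f : ℝ → EReal) : ℝ → EReal :=
  fun a => ⨆ θ : ℝ, ((θ * a : ℝ) : EReal) - f θ

/-- The sweep `f°`: strictly positive values are swept to `+∞`. -/
def sweep (f : ℝ → EReal) : ℝ → EReal :=
  fun a => if f a ≤ 0 then f a else ⊤

/-- `speedp f = inf {a | f a > 0}`, as an extended real. -/
def speedp (f : ℝ → EReal) : EReal :=
  sInf ((fun a : ℝ => (a : EReal)) '' {a : ℝ | 0 < f a})

/-- k-convex functions. -/
def KConvex (f : ℝ → EReal) : Prop :=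
  EConvex f ∧ (∃ θ : ℝ, 0 < θ ∧ f θ < ⊤) ∧ (∀ θ : ℝ, θ < 0 → f θ = ⊤)

/-- The closure `cl f`: the greatest lower semicontinuous function beneath `f`. -/
def ecl (f : ℝ → EReal) : ℝ → EReal :=
  fun x => ⨆ g : {g : ℝ → EReal // LowerSemicontinuous g ∧ ∀ y, g y ≤ f y}, g.1 x

/-- r-functions: increasing, convex, somewhere in `(−∞,0)`, left continuous,
and `+∞` whenever strictly positive. -/
def RFunction (r : ℝ → EReal) : Prop :=
  Monotone r ∧ EConvex r ∧ (∃ a : ℝ, ⊥ < r a ∧ r a < 0) ∧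
    (∀ a : ℝ, ContinuousWithinAt r (Set.Iio a) a) ∧
    (∀ a : ℝ, 0 < r a → r a = ⊤)

/-- The greatest lower semicontinuous convex function beneath `f` and `g`. -/
def cv (f g : ℝ → EReal) : ℝ → EReal :=
  fun x => ⨆ h : {h : ℝ → EReal //
    LowerSemicontinuous h ∧ EConvex h ∧ (∀ y, h y ≤ f y) ∧ (∀ y, h y ≤ g y)}, h.1 x

/-- `enat f`: the pointwise sup of convex minorants `g` of `f` with `g θ / θ`
antitone on `(0,∞)`. -/
def enat (f : ℝ → EReal) : ℝ → EReal :=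
  fun x => ⨆ g : {g : ℝ → EReal // EConvex g ∧ (∀ y, g y ≤ f y) ∧
      AntitoneOn (fun θ : ℝ => g θ * ((θ⁻¹ : ℝ) : EReal)) (Set.Ioi 0)}, g.1 x

/-- `varthetapp f = sup {θ | f θ = enat f θ}`. -/
def varthetapp (f : ℝ → EReal) : EReal :=
  sSup ((fun θ : ℝ => (θ : EReal)) '' {θ : ℝ | f θ = enat f θ})

/-- `flt f = ((f*)°)*`. -/
def flt (f : ℝ → EReal) : ℝ → EReal := Fd (sweep (Fd f))

/-- The set where `f` is finite. -/
def Phi (f : ℝ → EReal) : Set ℝ := {θ : ℝ | f θ < ⊤}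

/-- `A⁺`: points in `A` or above a point of `A`. -/
def plusSet (A : Set ℝ) : Set ℝ := {x : ℝ | ∃ a ∈ A, a ≤ x}

/-- The subdifferential of `f` at `φ`. -/
def esubdiff (f : ℝ → EReal) (φ : ℝ) : Set ℝ :=
  {a : ℝ | ∀ θ : ℝ, f φ + ((a * (θ - φ) : ℝ) : EReal) ≤ f θ}

open Classical in
/-- The convex indicator of a set: `0` on `C` and `+∞` off it. -/
def echi (C : Set ℝ) : ℝ → EReal := fun θ => if θ ∈ C then 0 else ⊤

/-! helpers -/

lemma le_coe_of_forall_eps {x : EReal} {y : ℝ}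
    (h : ∀ ε : ℝ, 0 < ε → x ≤ ((y + ε : ℝ) : EReal)) : x ≤ (y : EReal) := by
  by_contra hc
  push_neg at hc
  induction x with
  | bot => exact absurd hc (by simp)
  | coe x =>
    have := h ((x - y)/2) (by linarith [EReal.coe_lt_coe_iff.1 hc])
    rw [EReal.coe_le_coe_iff] at this
    have := EReal.coe_lt_coe_iff.1 hc
    linarith
  | top =>
    have := h 1 one_pos
    exact absurd ((EReal.coe_lt_top (y+1)).trans_le this) (lt_irrefl _)

lemma econvex_chord {q : ℝ → EReal} (hq : EConvex q) {x₁ x₂ t₁ t₂ θ : ℝ}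
    (h0 : 0 ≤ θ) (h1 : θ ≤ 1) (hx1 : q x₁ ≤ (t₁ : EReal)) (hx2 : q x₂ ≤ (t₂ : EReal)) :
    q (θ * x₁ + (1 - θ) * x₂) ≤ ((θ * t₁ + (1 - θ) * t₂ : ℝ) : EReal) := by
  have hmem := hq (x := (x₁, t₁)) (y := (x₂, t₂)) hx1 hx2 h0 (by linarith : (0:ℝ) ≤ 1 - θ)
    (by ring)
  have heq : (θ • ((x₁, t₁) : ℝ × ℝ) + (1 - θ) • ((x₂, t₂) : ℝ × ℝ)) =
      ((θ * x₁ + (1 - θ) * x₂, θ * t₁ + (1 - θ) * t₂) : ℝ × ℝ) := by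
    simp [Prod.ext_iff, smul_eq_mul]
  rw [heq] at hmem
  exact hmem

lemma econvex_affine (k m : ℝ) : EConvex (fun x => ((k * x + m : ℝ) : EReal)) := by
  intro p hp q hq a b ha hb hab
  simp only [mem_setOf_eq, EReal.coe_le_coe_iff] at hp hq ⊢
  simp only [Prod.fst_add, Prod.snd_add, Prod.smul_fst, Prod.smul_snd, smul_eq_mul]
  have h1 := add_le_add (mul_le_mul_of_nonneg_left hp ha) (mul_le_mul_of_nonneg_left hq hb)
  have hm : m = a * m + b * m := by rw [← add_mul, hab, one_mul]
  nlinarith [h1, hm]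

lemma lsc_affine (k m : ℝ) : LowerSemicontinuous (fun x : ℝ => ((k * x + m : ℝ) : EReal)) :=
  (continuous_coe_real_ereal.comp (by continuity)).lowerSemicontinuous

/-- basic facts about cv -/
lemma cv_le_left (r g : ℝ → EReal) (x : ℝ) : cv r g x ≤ r x :=
  iSup_le fun h => h.2.2.2.1 x

lemma cv_le_right (r g : ℝ → EReal) (x : ℝ) : cv r g x ≤ g x :=
  iSup_le fun h => h.2.2.2.2 x

lemma le_cv {r g h : ℝ → EReal} (hlsc : LowerSemicontinuous h) (hcx : EConvex h)
    (h1 : ∀ y, h y ≤ r y) (h2 : ∀ y, h y ≤ g y) (x : ℝ) : h x ≤ cv r g x :=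
  le_iSup (fun h : {h : ℝ → EReal //
    LowerSemicontinuous h ∧ EConvex h ∧ (∀ y, h y ≤ r y) ∧ (∀ y, h y ≤ g y)} => h.1 x)
    ⟨h, hlsc, hcx, h1, h2⟩

lemma econvex_cv (r g : ℝ → EReal) : EConvex (cv r g) := by
  have : {p : ℝ × ℝ | cv r g p.1 ≤ (p.2 : EReal)} =
      ⋂ h : {h : ℝ → EReal //
        LowerSemicontinuous h ∧ EConvex h ∧ (∀ y, h y ≤ r y) ∧ (∀ y, h y ≤ g y)},
        {p : ℝ × ℝ | h.1 p.1 ≤ (p.2 : EReal)} := by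
    ext p
    simp [cv, iSup_le_iff, mem_iInter]
  rw [EConvex, this]
  exact convex_iInter fun h => h.2.2.1

/-! EReal helpers -/

lemma ereal_mul_le_coe {l t : ℝ} {x : EReal} (hl : 0 ≤ l) (h : x ≤ (t : EReal)) :
    (l : EReal) * x ≤ ((l * t : ℝ) : EReal) := by
  rw [EReal.coe_mul]
  exact mul_le_mul_of_nonneg_left h (by exact_mod_cast hl)

lemma coe_le_ereal_mul {l t : ℝ} {x : EReal} (hl : 0 ≤ l) (h : (t : EReal) ≤ x) :
    ((l * t : ℝ) : EReal) ≤ (l : EReal) * x := by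
  rw [EReal.coe_mul]
  exact mul_le_mul_of_nonneg_left h (by exact_mod_cast hl)

lemma ereal_mul_ne_bot {l : ℝ} {x : EReal} (hl : 0 ≤ l) (hx : x ≠ ⊥) :
    (l : EReal) * x ≠ ⊥ := by
  rcases eq_or_lt_of_le hl with h | h
  · rw [← h]; simp
  induction x with
  | bot => exact absurd rfl hx
  | coe x => rw [← EReal.coe_mul]; exact EReal.coe_ne_bot _
  | top => rw [EReal.coe_mul_top_of_pos h]; simp

lemma ereal_mul_lt_top {l : ℝ} {x : EReal} (hl : 0 < l) (h : (l : EReal) * x < ⊤) :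
    x < ⊤ := by
  by_contra hc
  rw [not_lt, top_le_iff] at hc
  rw [hc, EReal.coe_mul_top_of_pos hl] at h
  exact lt_irrefl _ h

lemma ereal_add_lt_top {x y : EReal} (hx : x ≠ ⊥) (hy : y ≠ ⊥) (h : x + y < ⊤) :
    x < ⊤ ∧ y < ⊤ := by
  constructor
  · by_contra hc
    rw [not_lt, top_le_iff] at hc
    rw [hc, EReal.top_add_of_ne_bot hy] at h
    exact lt_irrefl _ h
  · by_contra hc
    rw [not_lt, top_le_iff] at hc
    rw [hc, EReal.add_top_of_ne_bot hx] at h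
    exact lt_irrefl _ h

/-! combination values -/

def comboVal (r g : ℝ → EReal) (l b c : ℝ) : EReal :=
  (l : EReal) * r b + ((1 - l : ℝ) : EReal) * g c

def comboSet (r g : ℝ → EReal) (x : ℝ) : Set EReal :=
  {v : EReal | ∃ l b c : ℝ, l ∈ Set.Icc (0 : ℝ) 1 ∧ l * b + (1 - l) * c = x ∧
    v = comboVal r g l b c}

def Qf (r g : ℝ → EReal) : ℝ → EReal := fun x => sInf (comboSet r g x)

lemma comboVal_zero (r g : ℝ → EReal) (b c : ℝ) : comboVal r g 0 b c = g c := by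
  simp [comboVal]

lemma comboVal_one (r g : ℝ → EReal) (b c : ℝ) : comboVal r g 1 b c = r b := by
  simp [comboVal]

lemma comboVal_le {r g : ℝ → EReal} {l b c t s : ℝ} (h0 : 0 ≤ l) (h1 : l ≤ 1)
    (hb : r b ≤ (t : EReal)) (hc : g c ≤ (s : EReal)) :
    comboVal r g l b c ≤ ((l * t + (1 - l) * s : ℝ) : EReal) := by
  rw [EReal.coe_add]
  exact add_le_add (ereal_mul_le_coe h0 hb) (ereal_mul_le_coe (by linarith) hc)

lemma le_comboVal {r g : ℝ → EReal} {l b c t s : ℝ} (h0 : 0 ≤ l) (h1 : l ≤ 1)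
    (hb : (t : EReal) ≤ r b) (hc : (s : EReal) ≤ g c) :
    ((l * t + (1 - l) * s : ℝ) : EReal) ≤ comboVal r g l b c := by
  rw [EReal.coe_add]
  exact add_le_add (coe_le_ereal_mul h0 hb) (coe_le_ereal_mul (by linarith) hc)

lemma Qf_le {r g : ℝ → EReal} {x l b c : ℝ} (hl : l ∈ Set.Icc (0:ℝ) 1)
    (hsum : l * b + (1 - l) * c = x) : Qf r g x ≤ comboVal r g l b c :=
  sInf_le ⟨l, b, c, hl, hsum, rfl⟩

lemma Qf_le_left (r g : ℝ → EReal) (x : ℝ) : Qf r g x ≤ r x := by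
  have := Qf_le (r := r) (g := g) (x := x) (l := 1) (b := x) (c := x)
    ⟨zero_le_one, le_refl 1⟩ (by ring)
  rwa [comboVal_one] at this

lemma Qf_le_right (r g : ℝ → EReal) (x : ℝ) : Qf r g x ≤ g x := by
  have := Qf_le (r := r) (g := g) (x := x) (l := 0) (b := x) (c := x)
    ⟨le_refl 0, zero_le_one⟩ (by ring)
  rwa [comboVal_zero] at this

/-- affine lower bound passes to `Qf` -/
lemma lin_le_Qf {r g : ℝ → EReal} {k m : ℝ}
    (hr : ∀ y, ((k * y + m : ℝ) : EReal) ≤ r y) (hg : ∀ y, ((k * y + m : ℝ) : EReal) ≤ g y)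
    (x : ℝ) : ((k * x + m : ℝ) : EReal) ≤ Qf r g x := by
  apply le_sInf
  rintro v ⟨l, b, c, ⟨hl0, hl1⟩, hsum, rfl⟩
  have key : ((l * (k * b + m) + (1 - l) * (k * c + m) : ℝ) : EReal) ≤ comboVal r g l b c :=
    le_comboVal hl0 hl1 (hr b) (hg c)
  have : (l * (k * b + m) + (1 - l) * (k * c + m) : ℝ) = k * x + m := by
    rw [← hsum]; ring
  rwa [this] at key

/-! NC: nice combinations -/

lemma comboVal_coe {r g : ℝ → EReal} {l b c t s : ℝ} (h1 : r b = (t : EReal))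
    (h2 : g c = (s : EReal)) : comboVal r g l b c = ((l * t + (1 - l) * s : ℝ) : EReal) := by
  rw [comboVal, h1, h2, EReal.coe_add, EReal.coe_mul, EReal.coe_mul]

def NC (r g : ℝ → EReal) (x v : ℝ) : Prop :=
  ∃ l b c t s : ℝ, l ∈ Set.Icc (0:ℝ) 1 ∧ l * b + (1 - l) * c = x ∧
    r b ≤ (t : EReal) ∧ g c ≤ (s : EReal) ∧ l * t + (1 - l) * s ≤ v

lemma Qf_le_of_NC {r g : ℝ → EReal} {x v : ℝ} (h : NC r g x v) :
    Qf r g x ≤ (v : EReal) := by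
  obtain ⟨l, b, c, t, s, ⟨h0, h1⟩, hsum, hb, hc, hv⟩ := h
  exact (Qf_le ⟨h0, h1⟩ hsum).trans ((comboVal_le h0 h1 hb hc).trans (by exact_mod_cast hv))

lemma NC_of_lt {r g : ℝ → EReal} {a₀ c₁ x v : ℝ}
    (hrb : ∀ b, ⊥ < r b) (hgb : ∀ c, ⊥ < g c) (ha₀ : r a₀ < 0) (hc₁ : g c₁ < ⊤)
    (h : Qf r g x < (v : EReal)) : NC r g x v := by
  rw [Qf, sInf_lt_iff] at h
  obtain ⟨w, ⟨l, b, c, ⟨hl0, hl1⟩, hsum, rfl⟩, hw⟩ := h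
  rcases eq_or_lt_of_le hl0 with h0 | h0
  · -- l = 0
    subst h0
    rw [comboVal_zero] at hw
    have hcx : c = x := by linarith [hsum]
    subst hcx
    have hgc : g c ≠ ⊥ := (hgb c).ne'
    have hgt : g c ≠ ⊤ := (hw.trans (EReal.coe_lt_top v)).ne
    refine ⟨0, a₀, c, (r a₀).toReal, (g c).toReal, ⟨le_refl 0, zero_le_one⟩, by ring, ?_, ?_, ?_⟩
    · rw [EReal.coe_toReal ha₀.ne_top (hrb a₀).ne']
    · rw [EReal.coe_toReal hgt hgc]
    · have : g c = ((g c).toReal : EReal) := (EReal.coe_toReal hgt hgc).symm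
      rw [this] at hw
      have := EReal.coe_lt_coe_iff.1 hw
      simp only [zero_mul, sub_zero, one_mul, zero_add]
      linarith
  rcases eq_or_lt_of_le hl1 with h1 | h1
  · -- l = 1
    subst h1
    rw [comboVal_one] at hw
    have hbx : b = x := by linarith [hsum]
    subst hbx
    have hrbne : r b ≠ ⊥ := (hrb b).ne'
    have hrt : r b ≠ ⊤ := (hw.trans (EReal.coe_lt_top v)).ne
    refine ⟨1, b, c₁, (r b).toReal, (g c₁).toReal, ⟨zero_le_one, le_refl 1⟩, by ring, ?_, ?_, ?_⟩
    · rw [EReal.coe_toReal hrt hrbne]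
    · rw [EReal.coe_toReal hc₁.ne (hgb c₁).ne']
    · have : r b = ((r b).toReal : EReal) := (EReal.coe_toReal hrt hrbne).symm
      rw [this] at hw
      have := EReal.coe_lt_coe_iff.1 hw
      simp only [one_mul, sub_self, zero_mul, add_zero]
      linarith
  · -- 0 < l < 1
    have hne1 : ((l:EReal) * r b) ≠ ⊥ := ereal_mul_ne_bot hl0 (hrb b).ne'
    have hne2 : (((1-l:ℝ):EReal) * g c) ≠ ⊥ := ereal_mul_ne_bot (by linarith) (hgb c).ne'
    have htop : comboVal r g l b c < ⊤ := hw.trans (EReal.coe_lt_top v)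
    obtain ⟨ht1, ht2⟩ := ereal_add_lt_top hne1 hne2 htop
    have hrbt : r b < ⊤ := ereal_mul_lt_top h0 ht1
    have hgct : g c < ⊤ := ereal_mul_lt_top (by linarith : (0:ℝ) < 1 - l) ht2
    have e1 : r b = ((r b).toReal : EReal) := (EReal.coe_toReal hrbt.ne (hrb b).ne').symm
    have e2 : g c = ((g c).toReal : EReal) := (EReal.coe_toReal hgct.ne (hgb c).ne').symm
    refine ⟨l, b, c, (r b).toReal, (g c).toReal, ⟨hl0, hl1⟩, hsum, e1.le, e2.le, ?_⟩
    rw [comboVal_coe e1 e2] at hw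
    exact (EReal.coe_lt_coe_iff.1 hw).le

lemma NC_merge {r g : ℝ → EReal} (hrc : EConvex r) (hgc : EConvex g)
    {x z vx vz θ : ℝ} (hθ0 : 0 ≤ θ) (hθ1 : θ ≤ 1)
    (h1 : NC r g x vx) (h2 : NC r g z vz) :
    NC r g (θ * x + (1 - θ) * z) (θ * vx + (1 - θ) * vz) := by
  obtain ⟨l₁, b₁, c₁, t₁, s₁, ⟨hl₁0, hl₁1⟩, hsum₁, hb₁, hc₁, hv₁⟩ := h1
  obtain ⟨l₂, b₂, c₂, t₂, s₂, ⟨hl₂0, hl₂1⟩, hsum₂, hb₂, hc₂, hv₂⟩ := h2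
  set w : ℝ := θ * l₁ + (1 - θ) * l₂ with hw
  have hw0 : 0 ≤ w := by nlinarith
  have hw1 : w ≤ 1 := by nlinarith
  set μ : ℝ := if w = 0 then 0 else θ * l₁ / w with hμ
  set ν : ℝ := if 1 - w = 0 then 0 else θ * (1 - l₁) / (1 - w) with hν
  have hwμ : w * μ = θ * l₁ := by
    by_cases h : w = 0
    · simp only [hμ, h, if_pos, mul_zero, zero_mul]
      nlinarith [mul_nonneg hθ0 hl₁0, mul_nonneg (by linarith : (0:ℝ) ≤ 1-θ) hl₂0]
    · rw [hμ, if_neg h]; field_simp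
  have hwμ' : w * (1 - μ) = (1 - θ) * l₂ := by
    have : w * (1 - μ) = w - w * μ := by ring
    rw [this, hwμ, hw]; ring
  have h1wν : (1 - w) * ν = θ * (1 - l₁) := by
    by_cases h : 1 - w = 0
    · simp only [hν, h, if_pos, mul_zero, zero_mul]
      nlinarith [mul_nonneg hθ0 (by linarith : (0:ℝ) ≤ 1 - l₁),
        mul_nonneg (by linarith : (0:ℝ) ≤ 1-θ) (by linarith : (0:ℝ) ≤ 1 - l₂)]
    · rw [hν, if_neg h]; field_simp
  have h1wν' : (1 - w) * (1 - ν) = (1 - θ) * (1 - l₂) := by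
    have : (1 - w) * (1 - ν) = (1 - w) - (1 - w) * ν := by ring
    rw [this, h1wν, hw]; ring
  have hμ0 : 0 ≤ μ := by
    by_cases h : w = 0
    · simp [hμ, h]
    · rw [hμ, if_neg h]
      exact div_nonneg (mul_nonneg hθ0 hl₁0) (lt_of_le_of_ne hw0 (Ne.symm h)).le
  have hμ1 : μ ≤ 1 := by
    by_cases h : w = 0
    · simp [hμ, h]
    · rw [hμ, if_neg h]
      rw [div_le_one (lt_of_le_of_ne hw0 (Ne.symm h))]
      nlinarith [mul_nonneg (by linarith : (0:ℝ) ≤ 1-θ) hl₂0]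
  have hν0 : 0 ≤ ν := by
    by_cases h : 1 - w = 0
    · simp [hν, h]
    · rw [hν, if_neg h]
      exact div_nonneg (mul_nonneg hθ0 (by linarith)) (lt_of_le_of_ne (by linarith) (Ne.symm h)).le
  have hν1 : ν ≤ 1 := by
    by_cases h : 1 - w = 0
    · simp [hν, h]
    · rw [hν, if_neg h]
      rw [div_le_one (lt_of_le_of_ne (by linarith) (Ne.symm h))]
      nlinarith [mul_nonneg (by linarith : (0:ℝ) ≤ 1-θ) (by linarith : (0:ℝ) ≤ 1 - l₂)]
  refine ⟨w, μ * b₁ + (1 - μ) * b₂, ν * c₁ + (1 - ν) * c₂,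
    μ * t₁ + (1 - μ) * t₂, ν * s₁ + (1 - ν) * s₂, ⟨hw0, hw1⟩, ?_,
    econvex_chord hrc hμ0 hμ1 hb₁ hb₂, econvex_chord hgc hν0 hν1 hc₁ hc₂, ?_⟩
  · linear_combination b₁ * hwμ + b₂ * hwμ' + c₁ * h1wν + c₂ * h1wν' + θ * hsum₁ +
      (1 - θ) * hsum₂
  · have key : w * (μ * t₁ + (1 - μ) * t₂) + (1 - w) * (ν * s₁ + (1 - ν) * s₂) =
        θ * (l₁ * t₁ + (1 - l₁) * s₁) + (1 - θ) * (l₂ * t₂ + (1 - l₂) * s₂) := by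
      linear_combination t₁ * hwμ + t₂ * hwμ' + s₁ * h1wν + s₂ * h1wν'
    rw [key]
    exact add_le_add (mul_le_mul_of_nonneg_left hv₁ hθ0)
      (mul_le_mul_of_nonneg_left hv₂ (by linarith : (0:ℝ) ≤ 1 - θ))

lemma Qf_convexcomb {r g : ℝ → EReal} {a₀ c₁ : ℝ}
    (hrc : EConvex r) (hgc : EConvex g)
    (hrb : ∀ b, ⊥ < r b) (hgb : ∀ c, ⊥ < g c) (ha₀ : r a₀ < 0) (hc₁ : g c₁ < ⊤)
    {x z θ qx qz : ℝ} (hθ0 : 0 ≤ θ) (hθ1 : θ ≤ 1)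
    (hqx : Qf r g x ≤ (qx : EReal)) (hqz : Qf r g z ≤ (qz : EReal)) :
    Qf r g (θ * x + (1 - θ) * z) ≤ ((θ * qx + (1 - θ) * qz : ℝ) : EReal) := by
  apply le_coe_of_forall_eps
  intro ε hε
  have n1 : NC r g x (qx + ε) :=
    NC_of_lt hrb hgb ha₀ hc₁ (hqx.trans_lt (by exact_mod_cast (by linarith : qx < qx + ε)))
  have n2 : NC r g z (qz + ε) :=
    NC_of_lt hrb hgb ha₀ hc₁ (hqz.trans_lt (by exact_mod_cast (by linarith : qz < qz + ε)))
  have := Qf_le_of_NC (NC_merge hrc hgc hθ0 hθ1 n1 n2)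
  have e : θ * (qx + ε) + (1 - θ) * (qz + ε) = θ * qx + (1 - θ) * qz + ε := by ring
  rwa [e] at this


def Scomb (r g : ℝ → EReal) (a : ℝ) : Set EReal :=
  {v : EReal | ∃ l b c : ℝ, l ∈ Set.Icc (0 : ℝ) 1 ∧
    l * b + (1 - l) * c = a ∧
    v = (l : EReal) * r b + ((1 - l : ℝ) : EReal) * g c ∧
    v < 0 ∧ r b < 0}

lemma theta_between {u v w : ℝ} (h1 : u < v) (h2 : v < w) :
    0 < (w - v)/(w - u) ∧ (w - v)/(w - u) < 1 ∧
      ((w - v)/(w - u)) * u + (1 - (w - v)/(w - u)) * w = v := by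
  have h3 : 0 < w - u := by linarith
  refine ⟨div_pos (by linarith) h3, (div_lt_one h3).2 (by linarith), ?_⟩
  field_simp
  ring

lemma cv_le_comboVal {r g : ℝ → EReal} (hrb : ∀ b, ⊥ < r b) (hgb : ∀ c, ⊥ < g c)
    {x l b c : ℝ} (hl0 : 0 ≤ l) (hl1 : l ≤ 1) (hsum : l * b + (1 - l) * c = x) :
    cv r g x ≤ comboVal r g l b c := by
  rcases eq_or_lt_of_le hl0 with h0 | h0
  · subst h0
    rw [comboVal_zero]
    have hcx : c = x := by linarith [hsum]
    subst hcx
    exact cv_le_right r g c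
  rcases eq_or_lt_of_le hl1 with h1 | h1
  · subst h1
    rw [comboVal_one]
    have hbx : b = x := by linarith [hsum]
    subst hbx
    exact cv_le_left r g b
  by_cases hrt : r b = ⊤
  · have : comboVal r g l b c = ⊤ := by
      rw [comboVal, hrt, EReal.coe_mul_top_of_pos h0,
        EReal.top_add_of_ne_bot (ereal_mul_ne_bot (by linarith) (hgb c).ne')]
    rw [this]; exact le_top
  by_cases hgt : g c = ⊤
  · have : comboVal r g l b c = ⊤ := by
      rw [comboVal, hgt, EReal.coe_mul_top_of_pos (by exact_mod_cast (by linarith : (0:ℝ) < 1 - l)),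
        EReal.add_top_of_ne_bot (ereal_mul_ne_bot hl0 (hrb b).ne')]
    rw [this]; exact le_top
  · have e1 : r b = (((r b).toReal : ℝ) : EReal) := (EReal.coe_toReal hrt (hrb b).ne').symm
    have e2 : g c = (((g c).toReal : ℝ) : EReal) := (EReal.coe_toReal hgt (hgb c).ne').symm
    rw [comboVal_coe e1 e2]
    have := econvex_chord (econvex_cv r g) hl0 hl1 ((cv_le_left r g b).trans e1.le) ((cv_le_right r g c).trans e2.le)
    rwa [hsum] at this

lemma cv_le_sInf_S {r g : ℝ → EReal} (hrb : ∀ b, ⊥ < r b) (hgb : ∀ c, ⊥ < g c) (a : ℝ) :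
    cv r g a ≤ sInf (Scomb r g a) := by
  apply le_sInf
  rintro v ⟨l, b, c, ⟨hl0, hl1⟩, hsum, rfl, _, _⟩
  exact cv_le_comboVal hrb hgb hl0 hl1 hsum

lemma speedp_nonpos {r g : ℝ → EReal} {x : ℝ} (hx : (x : EReal) < speedp (cv r g)) :
    cv r g x ≤ 0 := by
  by_contra h
  push_neg at h
  have : speedp (cv r g) ≤ (x : EReal) := sInf_le ⟨x, h, rfl⟩
  exact absurd hx (not_lt.2 this)

lemma exists_upper {F : ℝ → EReal} {a : ℝ} (h : (a : EReal) < speedp F) :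
    ∃ a'' : ℝ, a < a'' ∧ (a'' : EReal) < speedp F := by
  obtain ⟨z, hz1, hz2⟩ := exists_between h
  have hzt : z ≠ ⊤ := (hz2.trans_le le_top).ne
  have hzb : z ≠ ⊥ := (bot_le.trans_lt hz1).ne'
  refine ⟨z.toReal, ?_, ?_⟩
  · have := EReal.coe_toReal hzt hzb
    rw [← EReal.coe_lt_coe_iff, this]
    exact hz1
  · rw [EReal.coe_toReal hzt hzb]
    exact hz2

lemma cv_neg {r g : ℝ → EReal} {a₀ a : ℝ} (hb : ⊥ < r a₀) (h0 : r a₀ < 0)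
    (ha : (a : EReal) < speedp (cv r g)) : cv r g a < 0 := by
  set ρ₀ : ℝ := (r a₀).toReal with hρdef
  have hρ : r a₀ = (ρ₀ : EReal) := (EReal.coe_toReal h0.ne_top hb.ne').symm
  have hρneg : ρ₀ < 0 := by
    rw [hρ] at h0; exact_mod_cast h0
  have hcva₀ : cv r g a₀ ≤ (ρ₀ : EReal) := (cv_le_left r g a₀).trans hρ.le
  have hzero : ((0:ℝ) : EReal) = (0 : EReal) := by norm_cast
  rcases lt_trichotomy a a₀ with h | h | h
  · -- a < a₀, use x := a - 1 < a < a₀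
    obtain ⟨ht0, ht1, hteq⟩ := theta_between (show a - 1 < a by linarith) h
    set θ := (a₀ - a)/(a₀ - (a-1)) with hθdef
    have hx : cv r g (a-1) ≤ ((0:ℝ) : EReal) := by
      rw [hzero]
      exact speedp_nonpos ((by exact_mod_cast (by linarith : a - 1 < a) :
        ((a-1 : ℝ) : EReal) < (a : EReal)).trans ha)
    have := econvex_chord (econvex_cv r g) ht0.le ht1.le hx hcva₀
    rw [hteq] at this
    refine this.trans_lt ?_
    have : θ * 0 + (1 - θ) * ρ₀ < 0 := by nlinarith
    exact_mod_cast this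
  · subst h
    exact hcva₀.trans_lt (by exact_mod_cast hρneg)
  · -- a₀ < a
    obtain ⟨a'', haa, ha''⟩ := exists_upper ha
    obtain ⟨ht0, ht1, hteq⟩ := theta_between h haa
    set θ := (a'' - a)/(a'' - a₀) with hθdef
    have hx : cv r g a'' ≤ ((0:ℝ) : EReal) := by rw [hzero]; exact speedp_nonpos ha''
    have := econvex_chord (econvex_cv r g) ht0.le ht1.le hcva₀ hx
    rw [hteq] at this
    refine this.trans_lt ?_
    have : θ * ρ₀ + (1 - θ) * 0 < 0 := by nlinarith
    exact_mod_cast this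

lemma exists_dom {r g : ℝ → EReal} {φ C a a'' : ℝ}
    (hLr : ∀ y, ((φ * y + C : ℝ) : EReal) ≤ r y)
    (hLg : ∀ y, ((φ * y + C : ℝ) : EReal) ≤ g y)
    (haa : a < a'') (ha'' : (a'' : EReal) < speedp (cv r g)) :
    ∃ d, a < d ∧ (r d < ⊤ ∨ g d < ⊤) := by
  by_contra hcon
  push_neg at hcon
  have hall : ∀ y, a < y → r y = ⊤ ∧ g y = ⊤ := by
    intro y hy
    obtain ⟨h1, h2⟩ := hcon y hy
    exact ⟨top_le_iff.1 h1, top_le_iff.1 h2⟩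
  set k : ℝ := max φ ((1 - (φ * a + C))/(a'' - a)) with hkdef
  set m : ℝ := φ * a + C - k * a with hmdef
  have hminr : ∀ y, ((k * y + m : ℝ) : EReal) ≤ r y := by
    intro y
    rcases le_or_gt y a with hy | hy
    · refine le_trans ?_ (hLr y)
      have hk : φ ≤ k := le_max_left _ _
      have : k * y + m ≤ φ * y + C := by nlinarith
      exact_mod_cast this
    · rw [(hall y hy).1]; exact le_top
  have hming : ∀ y, ((k * y + m : ℝ) : EReal) ≤ g y := by
    intro y
    rcases le_or_gt y a with hy | hy
    · refine le_trans ?_ (hLg y)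
      have hk : φ ≤ k := le_max_left _ _
      have : k * y + m ≤ φ * y + C := by nlinarith
      exact_mod_cast this
    · rw [(hall y hy).2]; exact le_top
  have hcv := le_cv (lsc_affine k m) (econvex_affine k m) hminr hming a''
  have hk2 : (1 - (φ * a + C))/(a'' - a) ≤ k := le_max_right _ _
  have hval : (1:ℝ) ≤ k * a'' + m := by
    have h3 : 0 < a'' - a := by linarith
    have := mul_le_mul_of_nonneg_right hk2 h3.le
    rw [div_mul_cancel₀ _ h3.ne'] at this
    nlinarith
  have hcv0 : cv r g a'' ≤ 0 := speedp_nonpos ha''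
  have : ((k * a'' + m : ℝ) : EReal) ≤ 0 := hcv.trans hcv0
  have : (k * a'' + m : ℝ) ≤ 0 := by exact_mod_cast this
  linarith

lemma Qf_lt_top_on {r g : ℝ → EReal} {a₀ d : ℝ} (hrm : Monotone r)
    (hrb : ∀ b, ⊥ < r b) (hgb : ∀ c, ⊥ < g c) (ha₀ : r a₀ < 0)
    (hd : r d < ⊤ ∨ g d < ⊤) : ∀ y ≤ d, Qf r g y < ⊤ := by
  intro y hyd
  rcases hd with hd | hd
  · exact ((Qf_le_left r g y).trans (hrm hyd)).trans_lt hd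
  · rcases le_or_gt y a₀ with hy | hy
    · exact ((Qf_le_left r g y).trans (hrm hy)).trans_lt (ha₀.trans (by norm_num))
    · -- a₀ < y ≤ d
      have had : a₀ < d := hy.trans_le hyd
      have h3 : 0 < d - a₀ := by linarith
      set l : ℝ := (d - y)/(d - a₀) with hldef
      have hl0 : 0 ≤ l := div_nonneg (by linarith) h3.le
      have hl1 : l ≤ 1 := by
        rw [div_le_one h3]; linarith
      have hsum : l * a₀ + (1 - l) * d = y := by
        rw [hldef]
        field_simp
        ring
      have e1 : r a₀ ≤ (((r a₀).toReal : ℝ) : EReal) :=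
        (EReal.coe_toReal ha₀.ne_top (hrb a₀).ne').symm.le
      have e2 : g d ≤ (((g d).toReal : ℝ) : EReal) :=
        (EReal.coe_toReal hd.ne (hgb d).ne').symm.le
      exact ((Qf_le ⟨hl0, hl1⟩ hsum).trans (comboVal_le hl0 hl1 e1 e2)).trans_lt
        (EReal.coe_lt_top _)

lemma Qf_le_cv {r g : ℝ → EReal} {a₀ c₁ φ C a d : ℝ}
    (hrc : EConvex r) (hgc : EConvex g)
    (hrb : ∀ b, ⊥ < r b) (hgb : ∀ c, ⊥ < g c) (ha₀ : r a₀ < 0) (hc₁ : g c₁ < ⊤)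
    (hLr : ∀ y, ((φ * y + C : ℝ) : EReal) ≤ r y)
    (hLg : ∀ y, ((φ * y + C : ℝ) : EReal) ≤ g y)
    (had : a < d) (hQd : ∀ y ≤ d, Qf r g y < ⊤) :
    Qf r g a ≤ cv r g a := by
  have hQbot : ∀ y, ⊥ < Qf r g y := fun y =>
    (bot_lt_iff_ne_bot.2 (EReal.coe_ne_bot _)).trans_le (lin_le_Qf hLr hLg y)
  set q : ℝ → ℝ := fun y => (Qf r g y).toReal with hqdef
  have hq : ∀ y, Qf r g y < ⊤ → Qf r g y = ((q y : ℝ) : EReal) := fun y hy =>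
    (EReal.coe_toReal hy.ne (hQbot y).ne').symm
  -- cleared three point inequality
  have key : ∀ u v w : ℝ, u < v → v < w → Qf r g u < ⊤ → Qf r g v < ⊤ → Qf r g w < ⊤ →
      q v * (w - u) ≤ q u * (w - v) + q w * (v - u) := by
    intro u v w huv hvw hu hv hw
    obtain ⟨ht0, ht1, hteq⟩ := theta_between huv hvw
    set θ := (w - v)/(w - u) with hθdef
    have := Qf_convexcomb (a₀ := a₀) (c₁ := c₁) hrc hgc hrb hgb ha₀ hc₁ ht0.le ht1.le
      (hq u hu).le (hq w hw).le
    rw [hteq, hq v hv] at this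
    have hreal : q v ≤ θ * q u + (1 - θ) * q w := by exact_mod_cast this
    have h3 : 0 < w - u := by linarith
    have h4 := mul_le_mul_of_nonneg_right hreal h3.le
    have e : (θ * q u + (1 - θ) * q w) * (w - u) = q u * (w - v) + q w * (v - u) := by
      rw [hθdef]
      field_simp
      ring
    rw [e] at h4
    linarith
  set K : Set ℝ := (fun x' => (q x' - q a)/(x' - a)) '' Ioc a d with hKdef
  have hKne : K.Nonempty := ⟨_, ⟨d, ⟨had, le_refl d⟩, rfl⟩⟩
  have hKbd : BddBelow K := by
    refine ⟨q a - q (a - 1), ?_⟩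
    rintro _ ⟨x', ⟨hx'a, hx'd⟩, rfl⟩
    have hcl := key (a-1) a x' (by linarith) hx'a (hQd _ (by linarith)) (hQd _ had.le)
      (hQd _ hx'd)
    rw [le_div_iff₀ (by linarith : (0:ℝ) < x' - a)]
    nlinarith
  set k : ℝ := sInf K with hkdef
  have hQa : Qf r g a = ((q a : ℝ) : EReal) := hq a (hQd a had.le)
  have hsupp : ∀ x : ℝ, ((q a + k * (x - a) : ℝ) : EReal) ≤ Qf r g x := by
    intro x
    rcases lt_trichotomy x a with hx | hx | hx
    · -- x < a
      have hslope : (q a - q x)/(a - x) ≤ k := by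
        apply le_csInf hKne
        rintro _ ⟨x', ⟨hx'a, hx'd⟩, rfl⟩
        have hcl := key x a x' hx hx'a (hQd _ (by linarith)) (hQd _ had.le) (hQd _ hx'd)
        rw [div_le_div_iff₀ (by linarith : (0:ℝ) < a - x) (by linarith : (0:ℝ) < x' - a)]
        nlinarith
      have h5 : q a - q x ≤ k * (a - x) := by
        rw [div_le_iff₀ (by linarith : (0:ℝ) < a - x)] at hslope
        linarith
      rw [hq x (hQd x (by linarith))]
      exact_mod_cast (by linarith : q a + k * (x - a) ≤ q x)
    · subst hx
      rw [hQa]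
      exact_mod_cast (by linarith : q x + k * (x - x) ≤ q x)
    · by_cases hxd : x ≤ d
      · have hslope : k ≤ (q x - q a)/(x - a) := csInf_le hKbd ⟨x, ⟨hx, hxd⟩, rfl⟩
        have h5 : k * (x - a) ≤ q x - q a := by
          rw [le_div_iff₀ (by linarith : (0:ℝ) < x - a)] at hslope
          linarith
        rw [hq x (hQd x hxd)]
        exact_mod_cast (by linarith : q a + k * (x - a) ≤ q x)
      · push_neg at hxd
        by_cases hQx : Qf r g x < ⊤
        · have hcl := key a d x had hxd (hQd _ had.le) (hQd _ (le_refl d)) hQx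
          have hslope : k ≤ (q d - q a)/(d - a) := csInf_le hKbd ⟨d, ⟨had, le_refl d⟩, rfl⟩
          have h6 : (q d - q a) * (x - a) ≤ (q x - q a) * (d - a) := by nlinarith
          have h7 : k * (x - a) ≤ q x - q a := by
            have h8 := mul_le_mul_of_nonneg_right hslope (by linarith : (0:ℝ) ≤ x - a)
            rw [div_mul_eq_mul_div] at h8
            have h9 : (q d - q a) * (x - a) / (d - a) ≤ q x - q a := by
              rw [div_le_iff₀ (by linarith : (0:ℝ) < d - a)]
              nlinarith
            linarith
          rw [hq x hQx]
          exact_mod_cast (by linarith : q a + k * (x - a) ≤ q x)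
        · push_neg at hQx
          exact le_top.trans hQx
  -- the affine support is a minorant of r and g
  set m : ℝ := q a - k * a with hmdef
  have heq : ∀ x : ℝ, q a + k * (x - a) = k * x + m := by intro x; rw [hmdef]; ring
  have hsupp' : ∀ x : ℝ, ((k * x + m : ℝ) : EReal) ≤ Qf r g x := by
    intro x; rw [← heq x]; exact hsupp x
  have hcv := le_cv (lsc_affine k m) (econvex_affine k m)
    (fun y => (hsupp' y).trans (Qf_le_left r g y))
    (fun y => (hsupp' y).trans (Qf_le_right r g y)) a
  have : ((k * a + m : ℝ) : EReal) = Qf r g a := by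
    rw [hQa, ← heq a]
    norm_num
  rwa [this] at hcv

lemma sInf_S_lt {r g : ℝ → EReal} {a₀ s a : ℝ}
    (hrm : Monotone r) (hrc : EConvex r)
    (hrb : ∀ b, ⊥ < r b) (hgb : ∀ c, ⊥ < g c) (ha₀ : r a₀ < 0)
    (hsw : ∀ b, 0 < r b → r b = ⊤)
    (hs : s < 0) (hQ : Qf r g a < (s : EReal)) : ∃ v ∈ Scomb r g a, v < (s : EReal) := by
  have hs0 : ((s : ℝ) : EReal) < 0 := by exact_mod_cast hs
  rw [Qf, sInf_lt_iff] at hQ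
  obtain ⟨w0, ⟨l, b, c, ⟨hl0, hl1⟩, hsum, rfl⟩, hw⟩ := hQ
  rcases eq_or_lt_of_le hl0 with h0 | h0
  · -- l = 0
    rw [← h0] at hsum hw
    rw [comboVal_zero] at hw
    have hcx : c = a := by linarith [hsum]
    subst hcx
    refine ⟨comboVal r g 0 a₀ c, ⟨0, a₀, c, ⟨le_refl 0, zero_le_one⟩, by ring, rfl, ?_, ha₀⟩, ?_⟩
    · rw [comboVal_zero]; exact hw.trans hs0
    · rw [comboVal_zero]; exact hw
  rcases eq_or_lt_of_le hl1 with h1 | h1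
  · -- l = 1
    rw [h1] at hsum hw
    rw [comboVal_one] at hw
    have hbx : b = a := by linarith [hsum]
    subst hbx
    have hra : r b < 0 := hw.trans hs0
    exact ⟨comboVal r g 1 b c, ⟨1, b, c, ⟨zero_le_one, le_refl 1⟩, hsum, rfl,
      by rw [comboVal_one]; exact hra, hra⟩, by rw [comboVal_one]; exact hw⟩
  · -- 0 < l < 1
    have hne1 : ((l : EReal) * r b) ≠ ⊥ := ereal_mul_ne_bot hl0 (hrb b).ne'
    have hne2 : (((1 - l : ℝ) : EReal) * g c) ≠ ⊥ := ereal_mul_ne_bot (by linarith) (hgb c).ne'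
    have htop : comboVal r g l b c < ⊤ := hw.trans (EReal.coe_lt_top s)
    obtain ⟨ht1, ht2⟩ := ereal_add_lt_top hne1 hne2 htop
    have hrbt : r b < ⊤ := ereal_mul_lt_top h0 ht1
    have hgct : g c < ⊤ := ereal_mul_lt_top (by linarith : (0:ℝ) < 1 - l) ht2
    set t₁ : ℝ := (r b).toReal with ht₁def
    set s₁ : ℝ := (g c).toReal with hs₁def
    have e1 : r b = (t₁ : EReal) := (EReal.coe_toReal hrbt.ne (hrb b).ne').symm
    have e2 : g c = (s₁ : EReal) := (EReal.coe_toReal hgct.ne (hgb c).ne').symm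
    have hval : l * t₁ + (1 - l) * s₁ < s := by
      rw [comboVal_coe e1 e2] at hw; exact_mod_cast hw
    by_cases hrbneg : r b < 0
    · exact ⟨comboVal r g l b c, ⟨l, b, c, ⟨hl0, hl1⟩, hsum, rfl, hw.trans hs0, hrbneg⟩, hw⟩
    · push_neg at hrbneg
      have hrb0 : r b = 0 := by
        rcases eq_or_lt_of_le hrbneg with h | h
        · exact h.symm
        · exact absurd (hsw b h) hrbt.ne
      have ht₁0 : t₁ = 0 := by
        have : ((t₁ : ℝ) : EReal) = ((0:ℝ) : EReal) := by rw [← e1, hrb0]; norm_cast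
        exact_mod_cast this
      have hgs : (1 - l) * s₁ < s := by rw [ht₁0] at hval; linarith
      have hs₁neg : s₁ < 0 := by nlinarith
      set ρ₀ : ℝ := (r a₀).toReal with hρdef
      have hρ : r a₀ = (ρ₀ : EReal) := (EReal.coe_toReal ha₀.ne_top (hrb a₀).ne').symm
      have hρneg : ρ₀ < 0 := by rw [hρ] at ha₀; exact_mod_cast ha₀
      have hab : a₀ < b := by
        by_contra hh
        push_neg at hh
        have := hrm hh
        rw [hrb0] at this
        exact absurd (this.trans_lt ha₀) (lt_irrefl _)
      by_cases hbc : b = c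
      · -- degenerate: a = b = c
        have hba : b = a := by rw [← hbc] at hsum; linarith [hsum]
        have hga : g a = (s₁ : EReal) := by rw [← hba, hbc]; exact e2
        have hs₁s : s₁ < s := by nlinarith
        refine ⟨comboVal r g 0 a₀ a, ⟨0, a₀, a, ⟨le_refl 0, zero_le_one⟩, by ring, rfl,
          ?_, ha₀⟩, ?_⟩
        · rw [comboVal_zero, hga]
          exact lt_trans (by exact_mod_cast hs₁s) hs0
        · rw [comboVal_zero, hga]
          exact_mod_cast hs₁s
      · -- main perturbation
        set β : ℝ := (b - a₀)/(b - c) with hβdef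
        have hbcne : b - c ≠ 0 := sub_ne_zero.2 hbc
        have hβc : β * (b - c) = b - a₀ := div_mul_cancel₀ _ hbcne
        have hgap : 0 < s - (1 - l) * s₁ := by linarith
        have habs1 : (0:ℝ) < |β| + 1 := by positivity
        have habs2 : (0:ℝ) < |β * s₁| + 1 := by positivity
        set δ : ℝ := min ((min l (1-l))/(2*(|β|+1))) ((s - (1 - l) * s₁)/(2*(|β*s₁|+1)))
          with hδdef
        have hδ0 : 0 < δ :=
          lt_min (div_pos (lt_min h0 (by linarith)) (by linarith)) (div_pos hgap (by linarith))
        have hδ1 : δ * (|β|+1) ≤ min l (1-l)/2 := by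
          have h2 := min_le_left ((min l (1-l))/(2*(|β|+1))) ((s - (1 - l) * s₁)/(2*(|β*s₁|+1)))
          have e : (min l (1-l))/(2*(|β|+1)) * (|β|+1) = min l (1-l)/2 := by
            field_simp
          rw [← hδdef] at h2
          have h2' := mul_le_mul_of_nonneg_right h2 habs1.le
          rw [e] at h2'
          exact h2'
        have hδβ : -(min l (1-l)/2) ≤ δ*β ∧ δ*β ≤ min l (1-l)/2 := by
          refine abs_le.1 ?_
          rw [abs_mul, abs_of_pos hδ0]
          linarith [hδ1, hδ0]
        have hminl : min l (1-l) ≤ l := min_le_left _ _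
        have hminr' : min l (1-l) ≤ 1 - l := min_le_right _ _
        set l' : ℝ := l + δ*β with hl'def
        have hl'ge : l/2 ≤ l' := by
          have := hδβ.1
          simp only [hl'def]
          linarith
        have hl'0 : 0 < l' := by linarith
        have hl'lt1 : l' < 1 := by
          have := hδβ.2
          simp only [hl'def]
          linarith
        have hδl' : δ ≤ l' := by
          simp only [hl'def]
          linarith [hδ1, mul_nonneg hδ0.le (abs_nonneg β), hδβ.1, hminl]
        set μ : ℝ := δ/l' with hμdef
        have hμ0 : 0 < μ := div_pos hδ0 hl'0
        have hμ1 : μ ≤ 1 := (div_le_one hl'0).2 hδl'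
        set b' : ℝ := μ*a₀ + (1-μ)*b with hb'def
        have hrbz : r b ≤ (((0:ℝ)) : EReal) := by rw [hrb0]; norm_cast
        have hrb'le : r b' ≤ ((μ*ρ₀ + (1-μ)*0 : ℝ) : EReal) :=
          econvex_chord hrc hμ0.le hμ1 hρ.le hrbz
        have hrb'neg : r b' < 0 := by
          refine hrb'le.trans_lt ?_
          have : μ*ρ₀ + (1-μ)*0 < 0 := by nlinarith
          exact_mod_cast this
        have hl'μ : l' * μ = δ := by rw [hμdef]; field_simp
        have hvb : comboVal r g l' b' c ≤
            ((l'*(μ*ρ₀ + (1-μ)*0) + (1-l')*s₁ : ℝ) : EReal) :=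
          comboVal_le hl'0.le hl'lt1.le hrb'le e2.le
        have hVs : l'*(μ*ρ₀ + (1-μ)*0) + (1-l')*s₁ < s := by
          have e : l'*(μ*ρ₀ + (1-μ)*0) = δ*ρ₀ := by
            have : l'*(μ*ρ₀ + (1-μ)*0) = (l'*μ)*ρ₀ := by ring
            rw [this, hl'μ]
          rw [e]
          simp only [hl'def]
          have h3 : -(δ*(β*s₁)) ≤ δ*|β*s₁| := by
            have := mul_le_mul_of_nonneg_left (neg_le_abs (β*s₁)) hδ0.le
            linarith
          have h4 : δ*(|β*s₁|+1) ≤ (s - (1 - l) * s₁)/2 := by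
            have h2 := min_le_right ((min l (1-l))/(2*(|β|+1)))
              ((s - (1 - l) * s₁)/(2*(|β*s₁|+1)))
            have e2' : (s - (1 - l) * s₁)/(2*(|β*s₁|+1)) * (|β*s₁|+1) =
                (s - (1 - l) * s₁)/2 := by
              field_simp
            rw [← hδdef] at h2
            have h2' := mul_le_mul_of_nonneg_right h2 habs2.le
            rw [e2'] at h2'
            exact h2'
          have hδρ : δ*ρ₀ < 0 := mul_neg_of_pos_of_neg hδ0 hρneg
          linarith [h3, h4, hδρ, hδ0, hgs]
        have hsum' : l' * b' + (1 - l') * c = a := by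
          have h1' : l' * b' = δ*a₀ + (l' - δ)*b := by
            have : l' * b' = (l'*μ)*a₀ + (l' - l'*μ)*b := by rw [hb'def]; ring
            rw [this, hl'μ]
          rw [h1']
          simp only [hl'def]
          linear_combination δ*hβc + hsum
        refine ⟨comboVal r g l' b' c, ⟨l', b', c, ⟨hl'0.le, hl'lt1.le⟩, hsum', rfl,
          ?_, hrb'neg⟩, ?_⟩
        · exact hvb.trans_lt (lt_trans (by exact_mod_cast hVs) hs0)
        · exact hvb.trans_lt (by exact_mod_cast hVs)

lemma caseA {r g : ℝ → EReal} {a₀ c₁ φ C : ℝ}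
    (hrm : Monotone r) (hrc : EConvex r) (hgc : EConvex g)
    (hrb : ∀ b, ⊥ < r b) (hgb : ∀ c, ⊥ < g c) (ha₀ : r a₀ < 0)
    (hsw : ∀ b, 0 < r b → r b = ⊤) (hc₁ : g c₁ < ⊤)
    (hLr : ∀ y, ((φ * y + C : ℝ) : EReal) ≤ r y)
    (hLg : ∀ y, ((φ * y + C : ℝ) : EReal) ≤ g y)
    {a : ℝ} (ha : (a : EReal) < speedp (cv r g)) : cv r g a = sInf (Scomb r g a) := by
  have hneg : cv r g a < 0 := cv_neg (hrb a₀) ha₀ ha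
  have hbotcv : ⊥ < cv r g a :=
    lt_of_lt_of_le (bot_lt_iff_ne_bot.2 (EReal.coe_ne_bot _))
      (le_cv (lsc_affine φ C) (econvex_affine φ C) hLr hLg a)
  obtain ⟨a'', haa, ha''⟩ := exists_upper ha
  obtain ⟨d, had, hdfin⟩ := exists_dom hLr hLg haa ha''
  have hQfin := Qf_lt_top_on hrm hrb hgb ha₀ hdfin
  have hQcv : Qf r g a ≤ cv r g a :=
    Qf_le_cv hrc hgc hrb hgb ha₀ hc₁ hLr hLg had hQfin
  refine le_antisymm (cv_le_sInf_S hrb hgb a) ?_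
  by_contra hcon
  push_neg at hcon
  obtain ⟨z, hz1, hz2⟩ := exists_between (lt_min hcon hneg)
  have hz0 : z < 0 := hz2.trans_le (min_le_right _ _)
  have hzt : z ≠ ⊤ := (hz0.trans_le le_top).ne
  have hzb : z ≠ ⊥ := (hbotcv.trans hz1).ne'
  have hzs : z = ((z.toReal : ℝ) : EReal) := (EReal.coe_toReal hzt hzb).symm
  have hsneg : z.toReal < 0 := by
    rw [hzs] at hz0; exact_mod_cast hz0
  have hQs : Qf r g a < ((z.toReal : ℝ) : EReal) := by
    rw [← hzs]; exact lt_of_le_of_lt hQcv hz1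
  obtain ⟨v, hvS, hvs⟩ := sInf_S_lt hrm hrc hrb hgb ha₀ hsw hsneg hQs
  have h5 : sInf (Scomb r g a) ≤ v := sInf_le hvS
  have h6 : z ≤ sInf (Scomb r g a) := (hz2.trans_le (min_le_left _ _)).le
  rw [hzs] at h6
  exact absurd (lt_of_le_of_lt (h6.trans h5) hvs) (lt_irrefl _)

lemma caseB {r g : ℝ → EReal} {a₀ : ℝ}
    (hrm : Monotone r) (hrc : EConvex r) (hrlsc : LowerSemicontinuous r)
    (hrb : ∀ b, ⊥ < r b) (ha₀ : r a₀ < 0) (hgtop : ∀ c, g c = ⊤)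
    {a : ℝ} (ha : (a : EReal) < speedp (cv r g)) : cv r g a = sInf (Scomb r g a) := by
  have hcv : ∀ x, cv r g x = r x := fun x =>
    le_antisymm (cv_le_left r g x)
      (le_cv hrlsc hrc (fun y => le_refl _) (fun y => (hgtop y) ▸ le_top) x)
  have hra : r a < 0 := by rw [← hcv a]; exact cv_neg (hrb a₀) ha₀ ha
  rw [hcv a]
  refine le_antisymm ?_ ?_
  · apply le_sInf
    rintro v ⟨l, b, c, ⟨hl0, hl1⟩, hsum, rfl, hv0, hrbn⟩
    rcases eq_or_lt_of_le hl1 with h1 | h1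
    · subst h1
      have hbx : b = a := by linarith [hsum]
      subst hbx
      exact (comboVal_one r g b c).symm.le
    · exfalso
      have htop2 : ((1 - l : ℝ) : EReal) * g c = ⊤ := by
        rw [hgtop c]
        exact EReal.coe_mul_top_of_pos (by linarith)
      have hvtop : (l : EReal) * r b + ((1 - l : ℝ) : EReal) * g c = ⊤ := by
        rw [htop2]
        exact EReal.add_top_of_ne_bot (ereal_mul_ne_bot hl0 (hrb b).ne')
      rw [hvtop] at hv0
      exact absurd hv0 not_top_lt
  · exact sInf_le ⟨1, a, 0, ⟨zero_le_one, le_refl 1⟩, by ring,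
      (comboVal_one r g a 0).symm, hra, hra⟩

lemma bot_lt_coe_sub (x : ℝ) {y : EReal} (h : y ≠ ⊤) : ⊥ < (x : EReal) - y := by
  induction y with
  | bot => simp [sub_eq_add_neg]
  | coe y => rw [← EReal.coe_sub]; exact EReal.bot_lt_coe _
  | top => exact absurd rfl h

lemma coe_sub_le_imp {x z : ℝ} {y : EReal} (h : (x : EReal) - y ≤ (z : EReal)) :
    ((x - z : ℝ) : EReal) ≤ y := by
  induction y with
  | bot =>
    exfalso
    rw [sub_eq_add_neg, EReal.neg_bot, EReal.coe_add_top] at h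
    exact absurd h (by simp)
  | coe y =>
    rw [← EReal.coe_sub] at h
    have : x - y ≤ z := by exact_mod_cast h
    exact_mod_cast (by linarith : x - z ≤ y)
  | top => exact le_top

lemma term_le_Fd (f : ℝ → EReal) (θ a : ℝ) : ((θ * a : ℝ) : EReal) - f θ ≤ Fd f a :=
  le_iSup (fun θ => ((θ * a : ℝ) : EReal) - f θ) θ

lemma econvex_Fd (f : ℝ → EReal) : EConvex (Fd f) := by
  have hset : {p : ℝ × ℝ | Fd f p.1 ≤ (p.2 : EReal)} =
      ⋂ θ : ℝ, {p : ℝ × ℝ | ((θ * p.1 : ℝ) : EReal) - f θ ≤ (p.2 : EReal)} := by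
    ext p
    simp [Fd, iSup_le_iff, mem_iInter]
  rw [EConvex, hset]
  apply convex_iInter
  intro θ
  by_cases hb : f θ = ⊥
  · convert convex_empty (𝕜 := ℝ) (E := ℝ × ℝ)
    ext p
    simp only [mem_setOf_eq, mem_empty_iff_false, iff_false]
    rw [hb, sub_eq_add_neg, EReal.neg_bot, EReal.coe_add_top]
    simp
  by_cases ht : f θ = ⊤
  · convert convex_univ (𝕜 := ℝ) (E := ℝ × ℝ) using 1
    ext p
    simp only [mem_setOf_eq, mem_univ, iff_true]
    rw [ht, sub_eq_add_neg, EReal.neg_top, EReal.add_bot]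
    exact bot_le
  · obtain ⟨u, hu⟩ : ∃ u : ℝ, f θ = (u : EReal) :=
      ⟨(f θ).toReal, (EReal.coe_toReal ht hb).symm⟩
    have hset2 : {p : ℝ × ℝ | ((θ * p.1 : ℝ) : EReal) - f θ ≤ (p.2 : EReal)} =
        {p : ℝ × ℝ | ((θ * p.1 + -u : ℝ) : EReal) ≤ (p.2 : EReal)} := by
      ext p
      simp only [mem_setOf_eq]
      rw [hu, ← EReal.coe_sub, sub_eq_add_neg]
    rw [hset2]
    exact econvex_affine θ (-u)

lemma lsc_of_mono_leftcts {r : ℝ → EReal} (hrm : Monotone r)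
    (hl : ∀ a : ℝ, ContinuousWithinAt r (Set.Iio a) a) : LowerSemicontinuous r := by
  intro x y hy
  have h1 : ∀ᶠ z in 𝓝[<] x, y < r z := (hl x) (isOpen_Ioi.mem_nhds hy)
  have h2 : ∀ᶠ z in 𝓝[≥] x, y < r z := by
    apply eventually_nhdsWithin_of_forall
    intro z hz
    exact hy.trans_le (hrm hz)
  rw [← nhdsLT_sup_nhdsGE x]
  rw [eventually_sup]
  exact ⟨h1, h2⟩

theorem main_result (f r : ℝ → EReal) (hf : (EConvex f ∧ (∃ θ : ℝ, 0 < θ ∧ f θ < ⊤) ∧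
      (∀ θ : ℝ, θ < 0 → f θ = ⊤)))
    (hr : Monotone r ∧ EConvex r ∧ (∃ a : ℝ, ⊥ < r a ∧ r a < 0) ∧
      (∀ a : ℝ, ContinuousWithinAt r (Set.Iio a) a) ∧
      (∀ a : ℝ, 0 < r a → r a = ⊤))
    (hfin : ∃ φ : ℝ, 0 < φ ∧ max (Fd r φ) (f φ) < ⊤) :
    ∀ a : ℝ, (a : EReal) < speedp (cv r (Fd f)) →
      cv r (Fd f) a = sInf (Scomb r (Fd f) a) := by
  obtain ⟨hfc, ⟨θ₀, hθ₀pos, hθ₀⟩, hfneg⟩ := hf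
  obtain ⟨hrm, hrc, ⟨ar, harb, harn⟩, hrlc, hsw⟩ := hr
  obtain ⟨φ, hφpos, hmax⟩ := hfin
  rw [max_lt_iff] at hmax
  obtain ⟨hFdr, hfφ⟩ := hmax
  intro a ha
  have hgb : ∀ c, ⊥ < Fd f c := fun c =>
    lt_of_lt_of_le (bot_lt_coe_sub (θ₀ * c) hθ₀.ne) (term_le_Fd f θ₀ c)
  have hgc : EConvex (Fd f) := econvex_Fd f
  have hFdrb : Fd r φ ≠ ⊥ :=
    (lt_of_lt_of_le (bot_lt_coe_sub (ar * φ) harn.ne_top) (term_le_Fd r ar φ)).ne'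
  have hDrEq : Fd r φ = (((Fd r φ).toReal : ℝ) : EReal) := (EReal.coe_toReal hFdr.ne hFdrb).symm
  set Dr : ℝ := (Fd r φ).toReal with hDrdef
  have hLr0 : ∀ y, ((φ * y - Dr : ℝ) : EReal) ≤ r y := by
    intro y
    have h1 : ((y * φ : ℝ) : EReal) - r y ≤ (Dr : EReal) := by
      rw [← hDrEq]; exact term_le_Fd r y φ
    have h2 := coe_sub_le_imp h1
    have e : y * φ - Dr = φ * y - Dr := by ring
    rwa [e] at h2
  set Cf : ℝ := (f φ).toReal with hCfdef
  have hCf : f φ ≤ (Cf : EReal) := EReal.le_coe_toReal hfφ.ne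
  have hLg0 : ∀ y, ((φ * y - Cf : ℝ) : EReal) ≤ Fd f y := by
    intro y
    have h1 : ((φ * y : ℝ) : EReal) - f φ ≤ Fd f y := term_le_Fd f φ y
    have h2 : ((φ * y : ℝ) : EReal) - (Cf : EReal) ≤ ((φ * y : ℝ) : EReal) - f φ :=
      EReal.sub_le_sub (le_refl _) hCf
    calc ((φ * y - Cf : ℝ) : EReal) = ((φ * y : ℝ) : EReal) - (Cf : EReal) :=
          EReal.coe_sub _ _
      _ ≤ Fd f y := h2.trans h1
  set C : ℝ := min (-Dr) (-Cf) with hCdef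
  have hLr : ∀ y, ((φ * y + C : ℝ) : EReal) ≤ r y := by
    intro y
    refine le_trans ?_ (hLr0 y)
    exact_mod_cast (by
      have := min_le_left (-Dr) (-Cf)
      rw [hCdef]
      linarith : φ * y + C ≤ φ * y - Dr)
  have hLg : ∀ y, ((φ * y + C : ℝ) : EReal) ≤ Fd f y := by
    intro y
    refine le_trans ?_ (hLg0 y)
    exact_mod_cast (by
      have := min_le_right (-Dr) (-Cf)
      rw [hCdef]
      linarith : φ * y + C ≤ φ * y - Cf)
  have hrb : ∀ b, ⊥ < r b := fun b =>
    lt_of_lt_of_le (bot_lt_iff_ne_bot.2 (EReal.coe_ne_bot _)) (hLr b)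
  by_cases hgtop : ∀ c : ℝ, Fd f c = ⊤
  · exact caseB hrm hrc (lsc_of_mono_leftcts hrm hrlc) hrb harn hgtop ha
  · push_neg at hgtop
    obtain ⟨c₁, hc₁⟩ := hgtop
    exact caseA hrm hrc hgc hrb hgb harn hsw (lt_top_iff_ne_top.2 hc₁) hLr hLg ha

/-- Lemma `conc maj`: under the conditions of Lemma `s-i good`, for `a` below
`speedp (cv r f*)`, the value `cv r f*` at `a` is the infimum of
`λ r(b) + (1−λ) f*(c)` over admissible convex combinations with `r(b) < 0`. -/
theorem cv_eq_inf_combinations (f r : ℝ → EReal) (hf : KConvex f) (hr : RFunction r)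
    (hfin : ∃ φ : ℝ, 0 < φ ∧ max (Fd r φ) (f φ) < ⊤) :
    ∀ a : ℝ, (a : EReal) < speedp (cv r (Fd f)) →
      cv r (Fd f) a =
        sInf {v : EReal | ∃ l b c : ℝ, l ∈ Set.Icc (0 : ℝ) 1 ∧
          l * b + (1 - l) * c = a ∧
          v = (l : EReal) * r b + ((1 - l : ℝ) : EReal) * Fd f c ∧
          v < 0 ∧ r b < 0} := by
  intro a ha
  exact main_result f r hf hr hfin a ha
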